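/- Fix $d\ge 2$. The linear span of the flag vectors $(f_S(P))_{S\subseteq\{0,\ldots,d-1\}}$ of all multiplicial $d$-polytopes $P$ has dimension at most $d$; more precisely, every flag number $f_S$ of a multiplicial $d$-polytope is a fixed (depending only on $S$ and $d$) rational linear combination of $1, f_0, f_1,\ldots, f_{d-2}$. -/

import Mathlib

/-- Integer binomial coefficient, zero outside the range `0 ≤ b ≤ a`. -/
def ch (a b : ℤ) : ℤ := if 0 ≤ b ∧ b ≤ a then ((a.toNat).choose b.toNat : ℤ) else 0

/-- The elements of `S` in increasing order, as integers. -/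
def sortedList (S : Finset ℕ) : List ℤ := (S.sort (· ≤ ·)).map (fun s => (s : ℤ))

/-- The parts `s₁+1, s₂-s₁, …, sᵣ-s_{r-1}, d-sᵣ` of the multinomial coefficient. -/
def multiParts (d : ℕ) (S : Finset ℕ) : List ℤ :=
  List.zipWith (· - ·) (sortedList S ++ [(d : ℤ)]) ((-1) :: sortedList S)

/-- The multinomial coefficient `(d+1)! / ((s₁+1)! (s₂-s₁)! ⋯ (d-sᵣ)!)`. -/
noncomputable def multinom (d : ℕ) (S : Finset ℕ) : ℚ :=
  (Nat.factorial (d + 1) : ℚ) /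
    ((multiParts d S).map (fun a => (Nat.factorial a.toNat : ℚ))).prod

/-- The sum `∑_{j=1}^{r} (s_j+1)(s_{j+1}-s_j)(s_{j+1}-1)` with `s_{r+1} = d`. -/
def pairSum (d : ℕ) (S : Finset ℕ) : ℤ :=
  (List.zipWith (fun a b => (a + 1) * (b - a) * (b - 1))
    (sortedList S) ((sortedList S).tail ++ [(d : ℤ)])).sum

/-- The flag number `f_S(M^{d,n})` of the `d`-dimensional multiplex with `n+1` vertices. -/
noncomputable def multiplexFlag (d n : ℕ) (S : Finset ℕ) : ℚ :=
  multinom d S *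
    (1 + (((n : ℚ) - d) / (((d : ℚ) + 1) * d * ((d : ℚ) - 1))) * (pairSum d S : ℚ))

structure GradedLattice (d : ℕ) where
  carrier : Type
  [fin : Fintype carrier]
  [po : PartialOrder carrier]
  [bo : BoundedOrder carrier]
  rk : carrier → ℕ
  rk_bot : rk ⊥ = 0
  rk_top : rk ⊤ = d + 1
  rk_strictMono : ∀ x y : carrier, x < y → rk x < rk y
  rk_cover : ∀ x y : carrier, x ⋖ y → rk y = rk x + 1

attribute [instance] GradedLattice.fin GradedLattice.po GradedLattice.bo

noncomputable def flagNum {d : ℕ} (P : GradedLattice d) (S : Finset ℕ) : ℕ :=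
  Nat.card {c : Finset P.carrier //
    IsChain (· ≤ ·) (c : Set P.carrier) ∧ (∀ x ∈ c, x ≠ ⊥ ∧ x ≠ ⊤) ∧
    c.image P.rk = S.image (· + 1)}

/-- Flag numbers of the part of `P` weakly below a face `F` (excluding `⊥`):
the number of chains of faces `≤ F` whose set of dimensions is `S`. -/
noncomputable def flagBelow {d : ℕ} (P : GradedLattice d) (F : P.carrier) (S : Finset ℕ) : ℕ :=
  Nat.card {c : Finset P.carrier //
    IsChain (· ≤ ·) (c : Set P.carrier) ∧ (∀ x ∈ c, x ≤ F ∧ x ≠ ⊥) ∧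
    c.image P.rk = S.image (· + 1)}

/-- `P` is multiplicial: every proper face `F` (of dimension `rk F - 1`, with
`flagBelow P F {0}` vertices) has the flag numbers of a multiplex. -/
def Multiplicial {d : ℕ} (P : GradedLattice d) : Prop :=
  ∀ F : P.carrier, F ≠ ⊥ → F ≠ ⊤ → ∀ S ⊆ Finset.range (P.rk F - 1),
    (flagBelow P F S : ℚ) = multiplexFlag (P.rk F - 1) (flagBelow P F {0} - 1) S

open Classical in
/-- `P` is Eulerian: every nontrivial interval has equally many elements of even
and of odd rank. -/
def Eulerian {d : ℕ} (P : GradedLattice d) : Prop :=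
  ∀ x y : P.carrier, x < y →
    ∑ z : P.carrier, (if x ≤ z ∧ z ≤ y then (-1 : ℤ) ^ P.rk z else 0) = 0

------------------------------------------------------------------------
-- auxiliary development
------------------------------------------------------------------------

attribute [local instance] Classical.propDecidable

namespace MF

open Finset

variable {d : ℕ} (P : GradedLattice d)

lemma rk_lt_of_ne_top {x : P.carrier} (h : x ≠ ⊤) : P.rk x < d + 1 := by
  have hx : x < ⊤ := lt_top_iff_ne_top.mpr h
  have := P.rk_strictMono x ⊤ hx
  rwa [P.rk_top] at this

lemma rk_pos_of_ne_bot {x : P.carrier} (h : x ≠ ⊥) : 0 < P.rk x := by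
  have hx : ⊥ < x := bot_lt_iff_ne_bot.mpr h
  have := P.rk_strictMono ⊥ x hx
  rwa [P.rk_bot] at this

lemma ne_bot_of_rk {x : P.carrier} {k : ℕ} (h : P.rk x = k + 1) : x ≠ ⊥ := by
  intro hx; rw [hx, P.rk_bot] at h; omega

lemma ne_top_of_rk {x : P.carrier} {k : ℕ} (h : P.rk x = k) (hk : k ≠ d + 1) : x ≠ ⊤ := by
  intro hx; rw [hx, P.rk_top] at h; omega

lemma eq_top_of_rk {x : P.carrier} (h : P.rk x = d + 1) : x = ⊤ := by
  by_contra hx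
  have := rk_lt_of_ne_top P hx
  omega

lemma eq_bot_of_rk {x : P.carrier} (h : P.rk x = 0) : x = ⊥ := by
  by_contra hx
  have := rk_pos_of_ne_bot P hx
  omega

lemma chain_injOn {c : Finset P.carrier} (hc : IsChain (· ≤ ·) (c : Set P.carrier)) :
    Set.InjOn P.rk (c : Set P.carrier) := by
  intro x hx y hy hxy
  by_contra hne
  rcases hc hx hy hne with h | h
  · have := P.rk_strictMono x y (lt_of_le_of_ne h hne)
    omega
  · have := P.rk_strictMono y x (lt_of_le_of_ne h (Ne.symm hne))
    omega

lemma flagNum_eq_card (S : Finset ℕ) :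
    flagNum P S = (univ.filter fun c : Finset P.carrier =>
      IsChain (· ≤ ·) (c : Set P.carrier) ∧ (∀ x ∈ c, x ≠ ⊥ ∧ x ≠ ⊤) ∧
      c.image P.rk = S.image (· + 1)).card := by
  rw [flagNum, Nat.card_eq_fintype_card, Fintype.card_subtype]

lemma flagBelow_eq_card (F : P.carrier) (S : Finset ℕ) :
    flagBelow P F S = (univ.filter fun c : Finset P.carrier =>
      IsChain (· ≤ ·) (c : Set P.carrier) ∧ (∀ x ∈ c, x ≤ F ∧ x ≠ ⊥) ∧
      c.image P.rk = S.image (· + 1)).card := by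
  rw [flagBelow, Nat.card_eq_fintype_card, Fintype.card_subtype]

lemma succ_injective' : Function.Injective (fun s : ℕ => s + 1) := fun a b h => Nat.succ_injective h

lemma chain_card {c : Finset P.carrier} {S : Finset ℕ}
    (hc : IsChain (· ≤ ·) (c : Set P.carrier)) (him : c.image P.rk = S.image (· + 1)) :
    c.card = S.card := by
  rw [← Finset.card_image_of_injOn (chain_injOn P hc), him]
  exact Finset.card_image_of_injective _ succ_injective'

lemma flagNum_singleton (k : ℕ) (hk : k < d) :
    flagNum P {k} = (univ.filter fun x : P.carrier => P.rk x = k + 1).card := by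
  rw [flagNum_eq_card]
  symm
  apply Finset.card_bij (fun x _ => ({x} : Finset P.carrier))
  · intro x hx
    simp only [mem_filter, mem_univ, true_and] at hx ⊢
    refine ⟨by simp [IsChain, Set.pairwise_singleton], ?_, by simp [hx]⟩
    intro y hy
    rw [Finset.mem_singleton] at hy
    subst hy
    exact ⟨ne_bot_of_rk P hx, ne_top_of_rk P hx (by omega)⟩
  · intro x _ y _ h
    simpa using h
  · intro c hc
    simp only [mem_filter, mem_univ, true_and] at hc
    obtain ⟨h1, _, h3⟩ := hc
    have hcard : c.card = 1 := by
      rw [chain_card P h1 h3]; simp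
    obtain ⟨x, hx⟩ := Finset.card_eq_one.mp hcard
    subst hx
    have hrk : P.rk x = k + 1 := by simpa using h3
    exact ⟨x, by simp [hrk], rfl⟩

lemma flagBelow_singleton (F : P.carrier) (s : ℕ) :
    flagBelow P F {s} = (univ.filter fun x : P.carrier => x ≤ F ∧ P.rk x = s + 1).card := by
  rw [flagBelow_eq_card]
  symm
  apply Finset.card_bij (fun x _ => ({x} : Finset P.carrier))
  · intro x hx
    simp only [mem_filter, mem_univ, true_and] at hx ⊢
    refine ⟨by simp [IsChain, Set.pairwise_singleton], ?_, by simp [hx.2]⟩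
    intro y hy
    rw [Finset.mem_singleton] at hy
    subst hy
    exact ⟨hx.1, ne_bot_of_rk P hx.2⟩
  · intro x _ y _ h
    simpa using h
  · intro c hc
    simp only [mem_filter, mem_univ, true_and] at hc
    obtain ⟨h1, h2, h3⟩ := hc
    have hcard : c.card = 1 := by
      rw [chain_card P h1 h3]; simp
    obtain ⟨x, hx⟩ := Finset.card_eq_one.mp hcard
    subst hx
    have hrk : P.rk x = s + 1 := by simpa using h3
    exact ⟨x, by simp [hrk, (h2 x (by simp)).1], rfl⟩

lemma flagNum_empty : flagNum P ∅ = 1 := by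
  rw [flagNum_eq_card]
  have : (univ.filter fun c : Finset P.carrier =>
      IsChain (· ≤ ·) (c : Set P.carrier) ∧ (∀ x ∈ c, x ≠ ⊥ ∧ x ≠ ⊤) ∧
      c.image P.rk = (∅ : Finset ℕ).image (· + 1)) = {∅} := by
    ext c
    simp only [mem_filter, mem_univ, true_and, Finset.mem_singleton, Finset.image_empty]
    constructor
    · intro h
      exact Finset.image_eq_empty.mp (Finset.mem_filter.mp h).2.2.2
    · rintro rfl
      simp [IsChain]
  rw [this]; simp

lemma flagNum_of_not_subset {S : Finset ℕ} (hS : ¬ S ⊆ range d) : flagNum P S = 0 := by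
  rw [flagNum_eq_card, Finset.card_eq_zero, Finset.filter_eq_empty_iff]
  intro c _
  rintro ⟨h1, h2, h3⟩
  obtain ⟨s, hsS, hsd⟩ := Finset.not_subset.mp hS
  have : s + 1 ∈ c.image P.rk := by
    rw [h3]; exact Finset.mem_image_of_mem _ hsS
  obtain ⟨x, hxc, hx⟩ := Finset.mem_image.mp this
  have hsd' : d ≤ s := by simpa using hsd
  have := rk_lt_of_ne_top P (h2 x hxc).2
  omega

lemma image_erase_of_injOn {α β : Type*} [DecidableEq α] [DecidableEq β] {f : α → β}
    {s : Finset α} (h : Set.InjOn f (s : Set α)) (a : α) (ha : a ∈ s) :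
    (s.erase a).image f = (s.image f).erase (f a) := by
  ext b
  simp only [Finset.mem_image, Finset.mem_erase]
  constructor
  · rintro ⟨x, ⟨hxa, hxs⟩, rfl⟩
    exact ⟨fun hfx => hxa (h hxs ha hfx), x, hxs, rfl⟩
  · rintro ⟨hb, x, hxs, rfl⟩
    exact ⟨x, ⟨fun h' => hb (by rw [h']), hxs⟩, rfl⟩

lemma flagNum_eq_sum_flagBelow (S : Finset ℕ) (hS : S ⊆ range d) {m : ℕ} (hm : m ∈ S)
    (hmax : ∀ s ∈ S, s ≤ m) :
    flagNum P S = ∑ F ∈ univ.filter (fun F : P.carrier => P.rk F = m + 1),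
      flagBelow P F (S.erase m) := by
  have hmd : m < d := by simpa using hS hm
  rw [flagNum_eq_card]
  have hrc : ∀ F : P.carrier, flagBelow P F (S.erase m) =
      ((univ.filter fun c : Finset P.carrier =>
        IsChain (· ≤ ·) (c : Set P.carrier) ∧ (∀ x ∈ c, x ≤ F ∧ x ≠ ⊥) ∧
        c.image P.rk = (S.erase m).image (· + 1))).card := fun F => flagBelow_eq_card P F _
  simp_rw [hrc, ← Finset.card_sigma]
  have key : ∀ c ∈ (univ.filter fun c : Finset P.carrier =>
      IsChain (· ≤ ·) (c : Set P.carrier) ∧ (∀ x ∈ c, x ≠ ⊥ ∧ x ≠ ⊤) ∧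
      c.image P.rk = S.image (· + 1)), ∃! x, x ∈ c ∧ P.rk x = m + 1 := by
    intro c hc
    rw [mem_filter] at hc
    obtain ⟨-, h1, -, h3⟩ := hc
    have : m + 1 ∈ c.image P.rk := by
      rw [h3]; exact Finset.mem_image_of_mem _ hm
    obtain ⟨x, hxc, hx⟩ := Finset.mem_image.mp this
    refine ⟨x, ⟨hxc, hx⟩, ?_⟩
    rintro y ⟨hyc, hy⟩
    exact chain_injOn P h1 hyc hxc (by rw [hx, hy])
  apply Finset.card_bij (fun c hc =>
    (⟨c.choose (fun x => P.rk x = m + 1) (key c hc),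
      c.erase (c.choose (fun x => P.rk x = m + 1) (key c hc))⟩ :
      Σ _ : P.carrier, Finset P.carrier))
  · intro c hc
    have hcmem := hc
    rw [mem_filter] at hcmem
    obtain ⟨-, h1, h2, h3⟩ := hcmem
    set F := c.choose (fun x => P.rk x = m + 1) (key c hc) with hF
    have hFc : F ∈ c := Finset.choose_mem _ _ _
    have hFrk : P.rk F = m + 1 := Finset.choose_property (fun x => P.rk x = m + 1) c (key c hc)
    rw [Finset.mem_sigma]
    constructor
    · simp [hFrk]
    · simp only [mem_filter, mem_univ, true_and]
      have hrkle : ∀ x ∈ c, P.rk x ≤ m + 1 := by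
        intro x hxc
        have : P.rk x ∈ c.image P.rk := Finset.mem_image_of_mem _ hxc
        rw [h3] at this
        obtain ⟨s, hsS, hs⟩ := Finset.mem_image.mp this
        have := hmax s hsS
        omega
      have hle : ∀ x ∈ c.erase F, x ≤ F ∧ x ≠ ⊥ := by
        intro x hx
        rw [Finset.mem_erase] at hx
        obtain ⟨hne, hxc⟩ := hx
        refine ⟨?_, (h2 x hxc).1⟩
        rcases h1 hxc hFc hne with h | h
        · exact h
        · exfalso
          have := P.rk_strictMono F x (lt_of_le_of_ne h (Ne.symm hne))
          have := hrkle x hxc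
          omega
      refine ⟨IsChain.mono ?_ h1, hle, ?_⟩
      · intro x hx; exact Finset.mem_coe.mpr (Finset.mem_of_mem_erase (Finset.mem_coe.mp hx))
      · rw [image_erase_of_injOn (chain_injOn P h1) F hFc, h3, hFrk,
          ← Finset.image_erase succ_injective' S m]
  · intro c1 hc1 c2 hc2 heq
    rw [Sigma.ext_iff] at heq
    obtain ⟨hF, he⟩ := heq
    have he' := eq_of_heq he
    have h1 : c1 = insert (c1.choose (fun x => P.rk x = m + 1) (key c1 hc1))
        (c1.erase (c1.choose (fun x => P.rk x = m + 1) (key c1 hc1))) :=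
      (Finset.insert_erase (Finset.choose_mem _ _ _)).symm
    have h2 : c2 = insert (c2.choose (fun x => P.rk x = m + 1) (key c2 hc2))
        (c2.erase (c2.choose (fun x => P.rk x = m + 1) (key c2 hc2))) :=
      (Finset.insert_erase (Finset.choose_mem _ _ _)).symm
    simp only at hF he'
    rw [h1, h2, he', hF]
  · rintro ⟨F, c'⟩ hb
    rw [Finset.mem_sigma, mem_filter, mem_filter] at hb
    obtain ⟨⟨-, hFrk⟩, -, h1, h2, h3⟩ := hb
    dsimp only at hFrk h1 h2 h3
    have hrklt : ∀ x ∈ c', P.rk x < m + 1 := by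
      intro x hx
      have : P.rk x ∈ c'.image P.rk := Finset.mem_image_of_mem _ hx
      rw [h3] at this
      obtain ⟨s, hsS, hs⟩ := Finset.mem_image.mp this
      rw [Finset.mem_erase] at hsS
      have := hmax s hsS.2
      have := hsS.1
      omega
    have hFc' : F ∉ c' := fun h => by have := hrklt F h; omega
    have hFbot : F ≠ ⊥ := ne_bot_of_rk P hFrk
    have hFtop : F ≠ ⊤ := ne_top_of_rk P hFrk (by omega)
    have hins : insert F c' ∈ (univ.filter fun c : Finset P.carrier =>
        IsChain (· ≤ ·) (c : Set P.carrier) ∧ (∀ x ∈ c, x ≠ ⊥ ∧ x ≠ ⊤) ∧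
        c.image P.rk = S.image (· + 1)) := by
      rw [mem_filter]
      refine ⟨mem_univ _, ?_, ?_, ?_⟩
      · rw [Finset.coe_insert]
        exact IsChain.insert h1 (fun b hb _ => Or.inr (h2 b hb).1)
      · intro x hx
        rcases Finset.mem_insert.mp hx with rfl | hx
        · exact ⟨hFbot, hFtop⟩
        · refine ⟨(h2 x hx).2, ?_⟩
          intro htop
          exact hFtop (top_le_iff.mp (htop ▸ (h2 x hx).1))
      · rw [Finset.image_insert, h3, hFrk,
          Finset.image_erase succ_injective' S m]
        exact Finset.insert_erase (Finset.mem_image_of_mem _ hm)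
    refine ⟨insert F c', hins, ?_⟩
    have hch : (insert F c').choose (fun x => P.rk x = m + 1) (key _ hins) = F :=
      (key _ hins).unique ⟨Finset.choose_mem _ _ _,
          Finset.choose_property (fun x => P.rk x = m + 1) (insert F c') (key _ hins)⟩
        ⟨Finset.mem_insert_self _ _, hFrk⟩
    rw [Sigma.ext_iff]
    exact ⟨hch, heq_of_eq (by rw [hch]; exact Finset.erase_insert hFc')⟩

lemma one_le_flagBelow_zero {F : P.carrier} (hF : F ≠ ⊥) : 1 ≤ flagBelow P F {0} := by
  rw [flagBelow_singleton]
  have hne : (univ.filter fun z : P.carrier => ⊥ < z ∧ z ≤ F).Nonempty :=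
    ⟨F, by simp [bot_lt_iff_ne_bot.mpr hF]⟩
  obtain ⟨z, hzmin⟩ := Finset.exists_minimal hne
  have hz := hzmin.prop
  have hmin : ∀ w ∈ (univ.filter fun z : P.carrier => ⊥ < z ∧ z ≤ F), ¬ w < z :=
    fun w hw hwz => hzmin.not_lt hw hwz
  rw [mem_filter] at hz
  have hcov : (⊥ : P.carrier) ⋖ z := by
    refine ⟨hz.2.1, ?_⟩
    intro w hw hwz
    exact hmin w (by simp [hw, le_trans hwz.le hz.2.2]) hwz
  have hrk : P.rk z = 1 := by
    have := P.rk_cover ⊥ z hcov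
    rw [P.rk_bot] at this
    omega
  apply Finset.card_pos.mpr
  exact ⟨z, by simp [hz.2.2, hrk]⟩

noncomputable def Aq (k : ℕ) (S : Finset ℕ) : ℚ :=
  multinom k S * (1 - (k : ℚ) / (((k : ℚ) + 1) * k * ((k : ℚ) - 1)) * (pairSum k S : ℚ))

noncomputable def Bq (k : ℕ) (S : Finset ℕ) : ℚ :=
  multinom k S * (pairSum k S : ℚ) / (((k : ℚ) + 1) * k * ((k : ℚ) - 1))

lemma multiplexFlag_affine (k n : ℕ) (S : Finset ℕ) :
    multiplexFlag k n S = Aq k S + Bq k S * n := by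
  unfold multiplexFlag Aq Bq
  rw [div_eq_mul_inv, div_eq_mul_inv, div_eq_mul_inv]
  ring

lemma flagNum_insert_eq (hM : Multiplicial P) {m : ℕ} (hm1 : 1 ≤ m) (hmd : m + 1 ≤ d)
    {S : Finset ℕ} (hS : S ⊆ range m) :
    (flagNum P (insert m S) : ℚ) =
      (Aq m S - Bq m S) * flagNum P {m} + Bq m S * flagNum P (insert m {0}) := by
  have hmS : m ∉ S := fun h => by simpa using hS h
  have hm0 : m ∉ ({0} : Finset ℕ) := by simp; omega
  have hAsum : flagNum P (insert m S) =
      ∑ F ∈ univ.filter (fun F : P.carrier => P.rk F = m + 1), flagBelow P F S := by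
    have := flagNum_eq_sum_flagBelow P (insert m S)
      (by intro s hs; rcases Finset.mem_insert.mp hs with rfl | hs
          · simp; omega
          · have := hS hs; simp at this ⊢; omega)
      (Finset.mem_insert_self m S)
      (by intro s hs; rcases Finset.mem_insert.mp hs with rfl | hs
          · exact le_refl _
          · have := hS hs; simp at this; omega)
    rwa [Finset.erase_insert hmS] at this
  have hBsum : flagNum P (insert m {0}) =
      ∑ F ∈ univ.filter (fun F : P.carrier => P.rk F = m + 1), flagBelow P F {0} := by
    have := flagNum_eq_sum_flagBelow P (insert m {0})
      (by intro s hs; rcases Finset.mem_insert.mp hs with rfl | hs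
          · simp; omega
          · simp at hs; subst hs; simp; omega)
      (Finset.mem_insert_self m {0})
      (by intro s hs; rcases Finset.mem_insert.mp hs with rfl | hs
          · exact le_refl _
          · simp at hs; omega)
    rwa [Finset.erase_insert hm0] at this
  have hterm : ∀ F ∈ univ.filter (fun F : P.carrier => P.rk F = m + 1),
      (flagBelow P F S : ℚ) = (Aq m S - Bq m S) + Bq m S * (flagBelow P F {0} : ℚ) := by
    intro F hF
    rw [mem_filter] at hF
    have hFrk := hF.2
    have hFbot : F ≠ ⊥ := ne_bot_of_rk P hFrk
    have hFtop : F ≠ ⊤ := ne_top_of_rk P hFrk (by omega)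
    have hrk1 : P.rk F - 1 = m := by omega
    have hv : 1 ≤ flagBelow P F {0} := one_le_flagBelow_zero P hFbot
    have := hM F hFbot hFtop S (by rw [hrk1]; exact hS)
    rw [hrk1] at this
    rw [this, multiplexFlag_affine]
    have hcast : ((flagBelow P F {0} - 1 : ℕ) : ℚ) = (flagBelow P F {0} : ℚ) - 1 := by
      have := Nat.cast_sub (R := ℚ) hv
      simpa using this
    rw [hcast]
    ring
  rw [hAsum, hBsum]
  push_cast
  rw [Finset.sum_congr rfl hterm, Finset.sum_add_distrib, Finset.sum_const, ← Finset.mul_sum]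
  rw [nsmul_eq_mul, flagNum_singleton P m (by omega)]
  push_cast
  ring

lemma rk_le_succ (z : P.carrier) : P.rk z ≤ d + 1 := by
  by_cases hz : z = ⊤
  · rw [hz, P.rk_top]
  · exact le_of_lt (rk_lt_of_ne_top P hz)

lemma dehn_sommerville_int (hE : Eulerian P) {t : ℕ} (ht1 : 1 ≤ t) (htd : t ≤ d) :
    (-1 : ℤ) ^ t * (flagNum P {t-1} : ℤ) + (-1) ^ (d+1) * (flagNum P {t-1} : ℤ)
      + ∑ j ∈ Finset.Icc (t+1) d, (-1) ^ j * (flagNum P (insert (j-1) {t-1}) : ℤ) = 0 := by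
  have htt : t - 1 + 1 = t := by omega
  set T := univ.filter (fun x : P.carrier => P.rk x = t) with hT
  have hTcard : flagNum P {t-1} = T.card := by
    rw [flagNum_singleton P (t-1) (by omega), htt]
  set cnt := fun z : P.carrier => ((T.filter (fun x => x ≤ z)).card : ℤ) with hcnt
  have hsum : ∑ z : P.carrier, (-1 : ℤ) ^ P.rk z * cnt z = 0 := by
    have h0 : ∀ x ∈ T, ∑ z : P.carrier, (if x ≤ z then (-1 : ℤ) ^ P.rk z else 0) = 0 := by
      intro x hx
      rw [hT, mem_filter] at hx
      have hxtop : x ≠ ⊤ := ne_top_of_rk P hx.2 (by omega)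
      have := hE x ⊤ (lt_top_iff_ne_top.mpr hxtop)
      simpa using this
    have hsum0 : ∑ x ∈ T, ∑ z : P.carrier, (if x ≤ z then (-1 : ℤ) ^ P.rk z else 0) = 0 :=
      Finset.sum_eq_zero h0
    rw [Finset.sum_comm] at hsum0
    rw [← hsum0]
    apply Finset.sum_congr rfl
    intro z _
    rw [← Finset.sum_filter, Finset.sum_const, nsmul_eq_mul, hcnt]
    ring
  set M := fun j => ∑ z ∈ univ.filter (fun z : P.carrier => P.rk z = j), cnt z with hM
  have hfib : ∑ j ∈ range (d+2), (-1 : ℤ) ^ j * M j = 0 := by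
    rw [← hsum, ← Finset.sum_fiberwise_of_maps_to (g := P.rk) (t := range (d+2))
      (fun z _ => by simp [Nat.lt_succ_iff, rk_le_succ P z])
      (fun z => (-1 : ℤ) ^ P.rk z * cnt z)]
    apply Finset.sum_congr rfl
    intro j _
    show (-1 : ℤ) ^ j * ∑ z ∈ univ.filter (fun z : P.carrier => P.rk z = j), cnt z = _
    rw [Finset.mul_sum]
    apply Finset.sum_congr rfl
    intro z hz
    rw [mem_filter] at hz
    rw [hz.2]
  have hMlt : ∀ j < t, M j = 0 := by
    intro j hj
    apply Finset.sum_eq_zero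
    intro z hz
    rw [mem_filter] at hz
    have hempty : T.filter (fun x => x ≤ z) = ∅ := by
      rw [Finset.filter_eq_empty_iff]
      intro x hx
      rw [hT, mem_filter] at hx
      intro hle
      rcases lt_or_eq_of_le hle with h | h
      · have := P.rk_strictMono x z h; omega
      · rw [h] at hx; omega
    show ((T.filter (fun x => x ≤ z)).card : ℤ) = 0
    rw [hempty]
    simp
  have hMt : M t = (T.card : ℤ) := by
    have h1 : ∀ z ∈ univ.filter (fun z : P.carrier => P.rk z = t), cnt z = 1 := by
      intro z hz
      rw [mem_filter] at hz
      have hfil : T.filter (fun x => x ≤ z) = {z} := by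
        ext x
        rw [Finset.mem_filter, hT, Finset.mem_filter, Finset.mem_singleton]
        constructor
        · rintro ⟨⟨-, hrk⟩, hle⟩
          rcases lt_or_eq_of_le hle with h | h
          · have := P.rk_strictMono x z h; omega
          · exact h
        · rintro rfl
          exact ⟨⟨mem_univ _, hz.2⟩, le_refl _⟩
      show ((T.filter (fun x => x ≤ z)).card : ℤ) = 1
      rw [hfil]
      simp
    show ∑ z ∈ univ.filter (fun z : P.carrier => P.rk z = t), cnt z = (T.card : ℤ)
    rw [Finset.sum_congr rfl h1, Finset.sum_const, nsmul_eq_mul, mul_one, hT]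
  have hMtop : M (d+1) = (T.card : ℤ) := by
    have hfil : univ.filter (fun z : P.carrier => P.rk z = d+1) = {⊤} := by
      ext z
      simp only [mem_filter, mem_univ, true_and, Finset.mem_singleton]
      exact ⟨fun h => eq_top_of_rk P h, fun h => by rw [h, P.rk_top]⟩
    show ∑ z ∈ univ.filter (fun z : P.carrier => P.rk z = d+1), cnt z = (T.card : ℤ)
    rw [hfil, Finset.sum_singleton]
    show ((T.filter (fun x => x ≤ (⊤ : P.carrier))).card : ℤ) = (T.card : ℤ)
    rw [Finset.filter_true_of_mem (fun x _ => le_top)]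
  have hMj : ∀ j, t < j → j ≤ d → M j = (flagNum P (insert (j-1) {t-1}) : ℤ) := by
    intro j hjt hjd
    have hj1 : j - 1 + 1 = j := by omega
    have hins := flagNum_eq_sum_flagBelow P (insert (j-1) {t-1})
      (by intro s hs; rcases Finset.mem_insert.mp hs with rfl | hs
          · simp; omega
          · simp at hs; subst hs; simp; omega)
      (Finset.mem_insert_self (j-1) {t-1})
      (by intro s hs; rcases Finset.mem_insert.mp hs with rfl | hs
          · exact le_refl _
          · simp at hs; omega)
    rw [Finset.erase_insert (by simp; omega)] at hins
    show ∑ z ∈ univ.filter (fun z : P.carrier => P.rk z = j), cnt z = _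
    rw [hins]
    push_cast
    rw [hj1]
    apply Finset.sum_congr rfl
    intro z hz
    rw [mem_filter] at hz
    show ((T.filter (fun x => x ≤ z)).card : ℤ) = _
    rw [flagBelow_singleton P z (t-1), htt]
    norm_cast
    congr 1
    rw [hT, Finset.filter_filter]
    apply Finset.filter_congr
    intro x _
    simp [and_comm]
  have hsub : Finset.Icc t (d+1) ⊆ range (d+2) := by
    intro j hj
    rw [Finset.mem_Icc] at hj
    simp only [Finset.mem_range]
    omega
  have hres : ∑ j ∈ Finset.Icc t (d+1), (-1 : ℤ) ^ j * M j = 0 := by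
    rw [← hfib]
    apply Finset.sum_subset hsub
    intro j hjr hjn
    rw [Finset.mem_range] at hjr
    rw [Finset.mem_Icc] at hjn
    have hjt : j < t := by omega
    rw [hMlt j hjt, mul_zero]
  rw [← Finset.sum_erase_add _ _ (by rw [Finset.mem_Icc]; omega : d+1 ∈ Finset.Icc t (d+1))] at hres
  have he1 : (Finset.Icc t (d+1)).erase (d+1) = Finset.Ico t (d+1) := by
    ext x; simp only [Finset.mem_erase, Finset.mem_Icc, Finset.mem_Ico]; omega
  rw [he1] at hres
  rw [← Finset.add_sum_erase _ _ (by rw [Finset.mem_Ico]; omega : t ∈ Finset.Ico t (d+1))] at hres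
  have he2 : (Finset.Ico t (d+1)).erase t = Finset.Icc (t+1) d := by
    ext x; simp only [Finset.mem_erase, Finset.mem_Ico, Finset.mem_Icc]; omega
  rw [he2] at hres
  have hcong : ∑ j ∈ Finset.Icc (t+1) d, (-1 : ℤ) ^ j * M j =
      ∑ j ∈ Finset.Icc (t+1) d, (-1 : ℤ) ^ j * (flagNum P (insert (j-1) {t-1}) : ℤ) := by
    apply Finset.sum_congr rfl
    intro j hj
    rw [Finset.mem_Icc] at hj
    rw [hMj j (by omega) hj.2]
  rw [hcong, hMt, hMtop] at hres
  rw [hTcard]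
  linarith [hres]

lemma dehn_sommerville (hE : Eulerian P) {t : ℕ} (ht1 : 1 ≤ t) (htd : t ≤ d) :
    (-1 : ℚ) ^ t * (flagNum P {t-1} : ℚ) + (-1) ^ (d+1) * (flagNum P {t-1} : ℚ)
      + ∑ j ∈ Finset.Icc (t+1) d, (-1) ^ j * (flagNum P (insert (j-1) {t-1}) : ℚ) = 0 := by
  have := dehn_sommerville_int P hE ht1 htd
  exact_mod_cast this

lemma euler_int (hE : Eulerian P) (hd : 1 ≤ d) :
    (1 : ℤ) + (-1) ^ (d+1) + ∑ j ∈ Finset.Icc 1 d, (-1 : ℤ) ^ j * (flagNum P {j-1} : ℤ) = 0 := by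
  have hbt : (⊥ : P.carrier) < ⊤ := by
    apply lt_of_le_of_ne bot_le
    intro h
    have h1 := P.rk_bot
    rw [h, P.rk_top] at h1
    omega
  have h0 : ∑ z : P.carrier, (-1 : ℤ) ^ P.rk z = 0 := by
    have := hE ⊥ ⊤ hbt
    simpa using this
  set M := fun j => ((univ.filter (fun z : P.carrier => P.rk z = j)).card : ℤ) with hM
  have hfib : ∑ j ∈ range (d+2), (-1 : ℤ) ^ j * M j = 0 := by
    rw [← h0, ← Finset.sum_fiberwise_of_maps_to (g := P.rk) (t := range (d+2))
      (fun z _ => by simp [Nat.lt_succ_iff, rk_le_succ P z])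
      (fun z => (-1 : ℤ) ^ P.rk z)]
    apply Finset.sum_congr rfl
    intro j _
    have h1 : ∑ z ∈ univ.filter (fun z : P.carrier => P.rk z = j), (-1 : ℤ) ^ P.rk z =
        ∑ _z ∈ univ.filter (fun z : P.carrier => P.rk z = j), (-1 : ℤ) ^ j := by
      apply Finset.sum_congr rfl
      intro z hz
      rw [mem_filter] at hz
      rw [hz.2]
    rw [h1, Finset.sum_const, nsmul_eq_mul]
    show (-1 : ℤ) ^ j * ((univ.filter (fun z : P.carrier => P.rk z = j)).card : ℤ) = _
    ring
  have hM0 : M 0 = 1 := by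
    show ((univ.filter (fun z : P.carrier => P.rk z = 0)).card : ℤ) = 1
    have hfil : (univ.filter (fun z : P.carrier => P.rk z = 0)) = {⊥} := by
      ext z
      simp only [mem_filter, mem_univ, true_and, Finset.mem_singleton]
      exact ⟨fun h => eq_bot_of_rk P h, fun h => by rw [h, P.rk_bot]⟩
    rw [hfil]; simp
  have hMtop : M (d+1) = 1 := by
    show ((univ.filter (fun z : P.carrier => P.rk z = d+1)).card : ℤ) = 1
    have hfil : (univ.filter (fun z : P.carrier => P.rk z = d+1)) = {⊤} := by
      ext z
      simp only [mem_filter, mem_univ, true_and, Finset.mem_singleton]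
      exact ⟨fun h => eq_top_of_rk P h, fun h => by rw [h, P.rk_top]⟩
    rw [hfil]; simp
  have hMj : ∀ j, 1 ≤ j → j ≤ d → M j = (flagNum P {j-1} : ℤ) := by
    intro j h1 h2
    show ((univ.filter (fun z : P.carrier => P.rk z = j)).card : ℤ) = _
    rw [flagNum_singleton P (j-1) (by omega)]
    norm_cast
    congr 1
    ext x
    constructor
    · intro h; simp at h ⊢; omega
    · intro h; simp at h ⊢; omega
  have hsub : Finset.Icc 0 (d+1) ⊆ range (d+2) := by
    intro j hj; rw [Finset.mem_Icc] at hj; simp only [Finset.mem_range]; omega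
  have hres : ∑ j ∈ Finset.Icc 0 (d+1), (-1 : ℤ) ^ j * M j = 0 := by
    rw [← hfib]
    apply Finset.sum_subset hsub
    intro j hjr hjn
    rw [Finset.mem_range] at hjr
    rw [Finset.mem_Icc] at hjn
    omega
  rw [← Finset.sum_erase_add _ _ (by rw [Finset.mem_Icc]; omega : d+1 ∈ Finset.Icc 0 (d+1))] at hres
  have he1 : (Finset.Icc 0 (d+1)).erase (d+1) = Finset.Ico 0 (d+1) := by
    ext x; simp only [Finset.mem_erase, Finset.mem_Icc, Finset.mem_Ico]; omega
  rw [he1] at hres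
  rw [← Finset.add_sum_erase _ _ (by rw [Finset.mem_Ico]; omega : 0 ∈ Finset.Ico 0 (d+1))] at hres
  have he2 : (Finset.Ico 0 (d+1)).erase 0 = Finset.Icc 1 d := by
    ext x; simp only [Finset.mem_erase, Finset.mem_Ico, Finset.mem_Icc]; omega
  rw [he2] at hres
  have hcong : ∑ j ∈ Finset.Icc 1 d, (-1 : ℤ) ^ j * M j =
      ∑ j ∈ Finset.Icc 1 d, (-1 : ℤ) ^ j * (flagNum P {j-1} : ℤ) := by
    apply Finset.sum_congr rfl
    intro j hj
    rw [Finset.mem_Icc] at hj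
    rw [hMj j hj.1 hj.2]
  rw [hcong, hM0, hMtop] at hres
  linarith [hres]

lemma euler (hE : Eulerian P) (hd : 1 ≤ d) :
    (1 : ℚ) + (-1) ^ (d+1) + ∑ j ∈ Finset.Icc 1 d, (-1 : ℚ) ^ j * (flagNum P {j-1} : ℚ) = 0 := by
  have := euler_int P hE hd
  exact_mod_cast this

------------------------------------------------------------------------
-- evaluation of the multiplex coefficients
------------------------------------------------------------------------

lemma sortedList_singleton (s : ℕ) : sortedList {s} = [(s : ℤ)] := by
  unfold sortedList
  rw [Finset.sort_singleton]
  simp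

lemma multiParts_singleton (k s : ℕ) : multiParts k {s} = [(s : ℤ) + 1, (k : ℤ) - s] := by
  unfold multiParts
  rw [sortedList_singleton]
  simp only [List.cons_append, List.nil_append, List.zipWith_cons_cons, List.zipWith_nil_right,
    List.zipWith]
  norm_num

lemma pairSum_singleton (k s : ℕ) :
    pairSum k {s} = ((s : ℤ) + 1) * ((k : ℤ) - s) * ((k : ℤ) - 1) := by
  unfold pairSum
  rw [sortedList_singleton]
  simp

lemma multinom_singleton (k s : ℕ) (hs : s < k) :
    multinom k {s} = (Nat.factorial (k+1) : ℚ) /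
      ((Nat.factorial (s+1) : ℚ) * (Nat.factorial (k-s) : ℚ)) := by
  unfold multinom
  rw [multiParts_singleton]
  simp only [List.map_cons, List.map_nil, List.prod_cons, List.prod_nil, mul_one]
  have h1 : ((s : ℤ) + 1).toNat = s + 1 := by omega
  have h2 : ((k : ℤ) - s).toNat = k - s := by omega
  rw [h1, h2]

lemma Bq_eval (t : ℕ) (ht : 2 ≤ t) : Bq t {t-1} = 1 := by
  have hps : (pairSum t {t-1} : ℤ) = (t : ℤ) * ((t : ℤ) - 1) := by
    rw [pairSum_singleton]
    have h1 : ((t-1 : ℕ) : ℤ) = (t : ℤ) - 1 := by omega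
    rw [h1]; ring
  have hpsq : ((pairSum t {t-1} : ℤ) : ℚ) = (t : ℚ) * ((t : ℚ) - 1) := by
    exact_mod_cast hps
  have hmn : multinom t {t-1} = (t : ℚ) + 1 := by
    rw [multinom_singleton t (t-1) (by omega)]
    have h2 : t - 1 + 1 = t := by omega
    have h3 : t - (t - 1) = 1 := by omega
    rw [h2, h3, Nat.factorial_succ t, Nat.factorial_one]
    have h4 : (Nat.factorial t : ℚ) ≠ 0 := Nat.cast_ne_zero.mpr (Nat.factorial_ne_zero t)
    field_simp
    push_cast; ring
  unfold Bq
  rw [hmn, hpsq]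
  have h5 : (t : ℚ) ≠ 0 := by positivity
  have h6 : (t : ℚ) - 1 ≠ 0 := by
    have : (2 : ℚ) ≤ (t : ℚ) := by exact_mod_cast ht
    intro h; nlinarith
  have h7 : (t : ℚ) + 1 ≠ 0 := by positivity
  field_simp

lemma Bq_one_zero : Bq 1 {0} = 0 := by
  unfold Bq
  norm_num

------------------------------------------------------------------------
-- the "good linear combination" framework
------------------------------------------------------------------------

def GoodFun (d : ℕ) (φ : GradedLattice d → ℚ) : Prop :=
  ∃ a : ℚ, ∃ c : ℕ → ℚ, ∀ P : GradedLattice d, Eulerian P → Multiplicial P →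
    φ P = a + ∑ i ∈ Finset.range (d-1), c i * (flagNum P {i} : ℚ)

lemma GoodFun.const (d : ℕ) (a : ℚ) : GoodFun d (fun _ => a) :=
  ⟨a, fun _ => 0, fun P _ _ => by simp⟩

lemma GoodFun.add {d : ℕ} {φ ψ : GradedLattice d → ℚ} (hφ : GoodFun d φ) (hψ : GoodFun d ψ) :
    GoodFun d (fun P => φ P + ψ P) := by
  obtain ⟨a1, c1, h1⟩ := hφ
  obtain ⟨a2, c2, h2⟩ := hψ
  refine ⟨a1 + a2, fun i => c1 i + c2 i, fun P hE hM => ?_⟩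
  dsimp only
  rw [h1 P hE hM, h2 P hE hM]
  simp only [add_mul]
  rw [Finset.sum_add_distrib]
  ring

lemma GoodFun.smul {d : ℕ} (r : ℚ) {φ : GradedLattice d → ℚ} (hφ : GoodFun d φ) :
    GoodFun d (fun P => r * φ P) := by
  obtain ⟨a, c, h⟩ := hφ
  refine ⟨r * a, fun i => r * c i, fun P hE hM => ?_⟩
  dsimp only
  rw [h P hE hM, mul_add, Finset.mul_sum]
  simp only [mul_assoc]

lemma GoodFun.sub {d : ℕ} {φ ψ : GradedLattice d → ℚ} (hφ : GoodFun d φ) (hψ : GoodFun d ψ) :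
    GoodFun d (fun P => φ P - ψ P) := by
  have := GoodFun.add hφ (GoodFun.smul (-1) hψ)
  convert this using 2
  ring

lemma GoodFun.congr {d : ℕ} {φ ψ : GradedLattice d → ℚ} (hψ : GoodFun d ψ)
    (h : ∀ P : GradedLattice d, Eulerian P → Multiplicial P → φ P = ψ P) : GoodFun d φ := by
  obtain ⟨a, c, hh⟩ := hψ
  exact ⟨a, c, fun P hE hM => (h P hE hM).trans (hh P hE hM)⟩

lemma GoodFun.sum {d : ℕ} {ι : Type*} (s : Finset ι) (ψ : ι → GradedLattice d → ℚ)
    (h : ∀ j ∈ s, GoodFun d (ψ j)) : GoodFun d (fun P => ∑ j ∈ s, ψ j P) := by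
  classical
  induction s using Finset.induction_on with
  | empty => simpa using GoodFun.const d 0
  | insert j s ha ih =>
    simp only [Finset.sum_insert ha]
    exact GoodFun.add (h j (Finset.mem_insert_self _ _))
      (ih (fun i hi => h i (Finset.mem_insert_of_mem hi)))

lemma GoodFun.basic {d : ℕ} (i : ℕ) (hi : i < d - 1) :
    GoodFun d (fun P => (flagNum P {i} : ℚ)) := by
  refine ⟨0, fun j => if j = i then 1 else 0, fun P hE hM => ?_⟩
  dsimp only
  rw [zero_add]
  rw [Finset.sum_congr rfl (fun j _ => by
    rw [ite_mul, one_mul, zero_mul] :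
    ∀ j ∈ Finset.range (d-1), (if j = i then (1:ℚ) else 0) * (flagNum P {j} : ℚ) =
      if j = i then (flagNum P {j} : ℚ) else 0)]
  rw [Finset.sum_ite_eq' (Finset.range (d-1)) i (fun j => (flagNum P {j} : ℚ))]
  simp [hi]

lemma Good_fk {d : ℕ} (hd : 2 ≤ d) (k : ℕ) (hk : k ≤ d - 1) :
    GoodFun d (fun P => (flagNum P {k} : ℚ)) := by
  rcases lt_or_eq_of_le hk with h | h
  · exact GoodFun.basic k h
  · subst h
    refine ⟨(-1:ℚ)^d * (-1 - (-1)^(d+1)), fun i => (-1:ℚ)^d * (-(-1)^(1+i)), fun P hE hM => ?_⟩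
    dsimp only
    have he := euler P hE (by omega)
    rw [← Finset.add_sum_erase _ _ (by rw [Finset.mem_Icc]; omega : d ∈ Finset.Icc 1 d)] at he
    have he1 : (Finset.Icc 1 d).erase d = Finset.Icc 1 (d-1) := by
      ext x; simp only [Finset.mem_erase, Finset.mem_Icc]; omega
    rw [he1] at he
    have hre : ∑ j ∈ Finset.Icc 1 (d-1), (-1:ℚ)^j * (flagNum P {j-1} : ℚ)
        = ∑ i ∈ Finset.range (d-1), (-1:ℚ)^(1+i) * (flagNum P {i} : ℚ) := by
      apply Finset.sum_nbij' (i := fun j => j - 1) (j := fun i => i + 1)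
      · intro a ha; simp only [Finset.mem_Icc] at ha; simp only [Finset.mem_range]; omega
      · intro a ha; simp only [Finset.mem_range] at ha; simp only [Finset.mem_Icc]; omega
      · intro a ha; simp only [Finset.mem_Icc] at ha; omega
      · intro a ha; simp only [Finset.mem_range] at ha; omega
      · intro a ha; simp only [Finset.mem_Icc] at ha
        have : 1 + (a - 1) = a := by omega
        rw [this]
    rw [hre] at he
    have hX : ∑ i ∈ Finset.range (d-1), ((-1:ℚ)^d * (-(-1)^(1+i))) * (flagNum P {i} : ℚ)
        = (-1:ℚ)^d * -(∑ i ∈ Finset.range (d-1), (-1:ℚ)^(1+i) * (flagNum P {i} : ℚ)) := by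
      rw [mul_neg, Finset.mul_sum, ← Finset.sum_neg_distrib]
      apply Finset.sum_congr rfl
      intro i _
      ring
    rw [hX]
    have hsq : (-1:ℚ)^d * (-1)^d = 1 := by
      rw [← pow_add]; exact Even.neg_one_pow ⟨d, rfl⟩
    linear_combination ((-1:ℚ)^d) * he - (flagNum P {d-1} : ℚ) * hsq

lemma GoodFun_f0_step {d : ℕ} (hd : 2 ≤ d) (t : ℕ) (ht1 : 1 ≤ t) (htd : t ≤ d - 1)
    (IH : ∀ t', t < t' → t' ≤ d - 1 → GoodFun d (fun P => (flagNum P (insert t' {0}) : ℚ))) :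
    GoodFun d (fun P => (flagNum P (insert t {0}) : ℚ)) := by
  rcases eq_or_lt_of_le ht1 with h1 | h2
  · -- t = 1
    subst h1
    apply GoodFun.congr (GoodFun.smul (Aq 1 {0}) (Good_fk hd 1 (by omega)))
    intro P hE hM
    have h := flagNum_insert_eq P hM (m := 1) le_rfl (by omega) (S := {0})
      (by intro s hs; simp at hs; subst hs; simp)
    rw [Bq_one_zero] at h
    rw [h]
    ring
  · -- 2 ≤ t
    have ht2 : 2 ≤ t := h2
    have g1 : GoodFun d (fun P => (flagNum P {t-1} : ℚ)) := GoodFun.basic _ (by omega)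
    have g2 : GoodFun d (fun P => (flagNum P {t} : ℚ)) := Good_fk hd t htd
    have g3 : GoodFun d (fun P => ∑ j ∈ Finset.Icc (t+2) d, (-1:ℚ)^j *
        ((Aq (j-1) {t-1} - Bq (j-1) {t-1}) * (flagNum P {j-1} : ℚ)
          + Bq (j-1) {t-1} * (flagNum P (insert (j-1) {0}) : ℚ))) := by
      apply GoodFun.sum
      intro j hj
      rw [Finset.mem_Icc] at hj
      exact GoodFun.smul _ (GoodFun.add
        (GoodFun.smul _ (Good_fk hd (j-1) (by omega)))
        (GoodFun.smul _ (IH (j-1) (by omega) (by omega))))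
    apply GoodFun.congr (GoodFun.sub
      (GoodFun.smul ((-1:ℚ)^t) (GoodFun.add (GoodFun.add
        (GoodFun.smul ((-1:ℚ)^t) g1) (GoodFun.smul ((-1:ℚ)^(d+1)) g1)) g3))
      (GoodFun.smul (Aq t {t-1} - 1) g2))
    intro P hE hM
    have hDS := dehn_sommerville P hE (by omega : 1 ≤ t) (by omega : t ≤ d)
    rw [← Finset.add_sum_erase _ _ (by rw [Finset.mem_Icc]; omega : t+1 ∈ Finset.Icc (t+1) d)] at hDS
    have her : (Finset.Icc (t+1) d).erase (t+1) = Finset.Icc (t+2) d := by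
      ext x; simp only [Finset.mem_erase, Finset.mem_Icc]; omega
    rw [her, show t + 1 - 1 = t from by omega] at hDS
    have hG : (flagNum P (insert t {t-1}) : ℚ)
        = (Aq t {t-1} - 1) * (flagNum P {t} : ℚ) + (flagNum P (insert t {0}) : ℚ) := by
      have h := flagNum_insert_eq P hM (m := t) (by omega) (by omega) (S := {t-1})
        (by intro s hs; simp at hs; subst hs; simp only [Finset.mem_range]; omega)
      rw [Bq_eval t ht2] at h
      rw [h]; ring
    rw [hG] at hDS
    have hcong : ∑ j ∈ Finset.Icc (t+2) d, (-1:ℚ)^j * (flagNum P (insert (j-1) {t-1}) : ℚ)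
        = ∑ j ∈ Finset.Icc (t+2) d, (-1:ℚ)^j *
          ((Aq (j-1) {t-1} - Bq (j-1) {t-1}) * (flagNum P {j-1} : ℚ)
            + Bq (j-1) {t-1} * (flagNum P (insert (j-1) {0}) : ℚ)) := by
      apply Finset.sum_congr rfl
      intro j hj
      rw [Finset.mem_Icc] at hj
      rw [flagNum_insert_eq P hM (m := j-1) (by omega) (by omega) (S := {t-1})
        (by intro s hs; simp at hs; subst hs; simp only [Finset.mem_range]; omega)]
    rw [hcong] at hDS
    have hsq : (-1:ℚ)^t * (-1)^t = 1 := by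
      rw [← pow_add]; exact Even.neg_one_pow ⟨t, rfl⟩
    rw [pow_succ] at hDS
    linear_combination (-(-1:ℚ)^t) * hDS
      - ((Aq t {t-1} - 1) * (flagNum P {t} : ℚ) + (flagNum P (insert t {0}) : ℚ)) * hsq

lemma GoodFun_f0 {d : ℕ} (hd : 2 ≤ d) : ∀ k t, 1 ≤ t → t ≤ d - 1 → d - 1 - t ≤ k →
    GoodFun d (fun P => (flagNum P (insert t {0}) : ℚ)) := by
  intro k
  induction k with
  | zero =>
    intro t h1 h2 h3
    exact GoodFun_f0_step hd t h1 h2 (fun t' ht' ht'' => absurd ht' (by omega))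
  | succ k ih =>
    intro t h1 h2 h3
    exact GoodFun_f0_step hd t h1 h2 (fun t' ht' ht'' => ih t' (by omega) ht'' (by omega))

lemma GoodFun_flagNum {d : ℕ} (hd : 2 ≤ d) (S : Finset ℕ) (hS : S ⊆ range d) :
    GoodFun d (fun P => (flagNum P S : ℚ)) := by
  rcases S.eq_empty_or_nonempty with rfl | hne
  · apply GoodFun.congr (GoodFun.const d 1)
    intro P _ _
    rw [flagNum_empty P]
    norm_num
  · set m := S.max' hne with hm
    have hmS : m ∈ S := S.max'_mem hne
    have hmax : ∀ s ∈ S, s ≤ m := fun s hs => S.le_max' s hs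
    have hmd : m < d := by simpa using hS hmS
    by_cases hm0 : m = 0
    · have hS0 : S = {0} := by
        apply Finset.eq_singleton_iff_unique_mem.mpr
        exact ⟨hm0 ▸ hmS, fun x hx => by have := hmax x hx; omega⟩
      rw [hS0]
      exact GoodFun.basic 0 (by omega)
    · have hm1 : 1 ≤ m := by omega
      have hins : insert m (S.erase m) = S := Finset.insert_erase hmS
      have hsub : S.erase m ⊆ range m := by
        intro s hs
        rw [Finset.mem_erase] at hs
        have := hmax s hs.2
        simp only [Finset.mem_range]
        rcases lt_or_eq_of_le this with h | h
        · exact h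
        · exact absurd h hs.1
      apply GoodFun.congr (GoodFun.add
        (GoodFun.smul (Aq m (S.erase m) - Bq m (S.erase m)) (Good_fk hd m (by omega)))
        (GoodFun.smul (Bq m (S.erase m)) (GoodFun_f0 hd (d-1-m) m hm1 (by omega) le_rfl)))
      intro P hE hM
      conv_lhs => rw [← hins]
      exact flagNum_insert_eq P hM hm1 (by omega) hsub

end MF

/-- Every flag number `f_S` of a multiplicial `d`-polytope is a fixed rational linear
combination (depending only on `S` and `d`) of `1, f_0, …, f_{d-2}`; consequently the
linear span of the flag vectors of all multiplicial `d`-polytopes has dimension at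
most `d`. -/
theorem multiplicial_flag_span {d : ℕ} (hd : 2 ≤ d) :
    (∀ S ⊆ Finset.range d, ∃ (a : ℚ) (c : ℕ → ℚ),
      ∀ P : GradedLattice d, Eulerian P → Multiplicial P →
        (flagNum P S : ℚ) = a + ∑ i ∈ Finset.range (d - 1), c i * (flagNum P {i} : ℚ)) ∧
    Module.rank ℚ (Submodule.span ℚ
        {v : Finset ℕ → ℚ | ∃ P : GradedLattice d, Eulerian P ∧ Multiplicial P ∧
          v = fun S => (flagNum P S : ℚ)})
      ≤ (d : Cardinal) := by
  classical
  have part1 : ∀ S ⊆ Finset.range d, ∃ (a : ℚ) (c : ℕ → ℚ),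
      ∀ P : GradedLattice d, Eulerian P → Multiplicial P →
        (flagNum P S : ℚ) = a + ∑ i ∈ Finset.range (d - 1), c i * (flagNum P {i} : ℚ) :=
    fun S hS => MF.GoodFun_flagNum hd S hS
  refine ⟨part1, ?_⟩
  have part1' : ∀ S : Finset ℕ, ∃ (a : ℚ) (c : ℕ → ℚ),
      ∀ P : GradedLattice d, Eulerian P → Multiplicial P →
        (flagNum P S : ℚ) = a + ∑ i ∈ Finset.range (d - 1), c i * (flagNum P {i} : ℚ) := by
    intro S
    by_cases hS : S ⊆ Finset.range d
    · exact part1 S hS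
    · exact ⟨0, fun _ => 0, fun P _ _ => by
        rw [MF.flagNum_of_not_subset P hS]; simp⟩
  choose a c hac using part1'
  set g : Fin d → (Finset ℕ → ℚ) := fun i =>
    if (i : ℕ) = 0 then (fun S => a S) else (fun S => c S ((i : ℕ) - 1)) with hg
  have hsub : {v : Finset ℕ → ℚ | ∃ P : GradedLattice d, Eulerian P ∧ Multiplicial P ∧
      v = fun S => (flagNum P S : ℚ)} ⊆ (Submodule.span ℚ (Set.range g) : Set (Finset ℕ → ℚ)) := by
    rintro v ⟨P, hE, hM, rfl⟩
    have hv : (fun S => (flagNum P S : ℚ)) = (fun S => a S) +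
        ∑ i ∈ Finset.range (d-1), (flagNum P {i} : ℚ) • (fun S => c S i) := by
      funext S
      simp only [Pi.add_apply, Finset.sum_apply, Pi.smul_apply, smul_eq_mul]
      rw [hac S P hE hM]
      congr 1
      apply Finset.sum_congr rfl
      intro i _
      ring
    rw [hv]
    apply Submodule.add_mem
    · apply Submodule.subset_span
      refine ⟨⟨0, by omega⟩, ?_⟩
      simp [hg]
    · apply Submodule.sum_mem
      intro i hi
      rw [Finset.mem_range] at hi
      apply Submodule.smul_mem
      apply Submodule.subset_span
      refine ⟨⟨i + 1, by omega⟩, ?_⟩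
      simp [hg]
  calc Module.rank ℚ (Submodule.span ℚ
        {v : Finset ℕ → ℚ | ∃ P : GradedLattice d, Eulerian P ∧ Multiplicial P ∧
          v = fun S => (flagNum P S : ℚ)})
      ≤ Module.rank ℚ (Submodule.span ℚ (Set.range g)) := by
        apply Submodule.rank_mono
        rw [Submodule.span_le]
        exact hsub
    _ ≤ Cardinal.mk (Set.range g) := rank_span_le _
    _ ≤ Cardinal.mk (Fin d) := Cardinal.mk_range_le
    _ = (d : Cardinal) := Cardinal.mk_fin d
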